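/- Let τ > 0 and x* ∈ S. Then x* is a τ-stationary point (for every block i, the restriction of x* to B_i is a projection of the restriction of x* − τ·∇f(x*) to B_i onto the set of vectors on B_i with at most s_i nonzero entries) if and only if for every block i the following hold: (i) if ‖x*_[i]‖₀ = s_i, then ∇f(x*)_j = 0 for every j ∈ B_i with x*_j ≠ 0, and |∇f(x*)_j| ≤ M_{s_i}(|x*_[i]|)/τ for every j ∈ B_i with x*_j = 0; (ii) if ‖x*_[i]‖₀ < s_i, then ∇f(x*)_j = 0 for every j ∈ B_i. -/

import Mathlib

open Matrix

/-- The (Wirtinger) gradient of `f(x) = ‖Ax - y‖²`, namely `∇f(x) = Aᴴ(Ax - y)`. -/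
noncomputable def gradf {m n : ℕ} (A : Matrix (Fin m) (Fin n) ℂ) (y : Fin m → ℂ)
    (x : Fin n → ℂ) : Fin n → ℂ :=
  Aᴴ.mulVec (A.mulVec x - y)

open Classical in
/-- `‖x_[B]‖₀`: the number of nonzero entries of `x` on the index set `B`. -/
noncomputable def blockL0 {n : ℕ} (B : Finset (Fin n)) (x : Fin n → ℂ) : ℕ :=
  (B.filter fun j => x j ≠ 0).card

/-- `v` (restricted to `B`) is a projection of `u` (restricted to `B`) onto the set of
vectors on `B` with at most `s` nonzero entries. -/
noncomputable def IsBlockProj {n : ℕ} (B : Finset (Fin n)) (s : ℕ)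
    (v u : Fin n → ℂ) : Prop :=
  blockL0 B v ≤ s ∧
    ∀ w : Fin n → ℂ, blockL0 B w ≤ s →
      Real.sqrt (∑ j ∈ B, ‖v j - u j‖ ^ 2) ≤ Real.sqrt (∑ j ∈ B, ‖w j - u j‖ ^ 2)

/-- `M_s(|x_[B]|)`: the `s`-th largest value among the moduli of the entries of `x` on `B`
(obtained as the entry at position `length - s` of the increasingly sorted list of moduli). -/
noncomputable def Mth {n : ℕ} (B : Finset (Fin n)) (s : ℕ) (x : Fin n → ℂ) : ℝ :=
  let l := Multiset.sort (B.val.map fun j => ‖x j‖) (· ≤ ·)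
  l.getD (l.length - s) 0

/-- Characterization of `τ`-stationary points: `x* ∈ S` is `τ`-stationary iff for every
block `i`, (i) if `‖x*_[i]‖₀ = s i` then the gradient vanishes on the support of `x*` in
`B i` and is bounded by `M_{s_i}(|x*_[i]|)/τ` off the support; (ii) if `‖x*_[i]‖₀ < s i`
then the gradient vanishes on all of `B i`. -/
lemma sorted_key (L : List ℝ) (hs : L.Pairwise (· ≤ ·)) (h0 : ∀ a ∈ L, 0 ≤ a) (s : ℕ)
    (hspos : 0 < s) (hsle : s ≤ L.length)
    (hcount : L.countP (fun a => decide (a ≠ 0)) = s) :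
    L.getD (L.length - s) 0 ∈ L ∧ L.getD (L.length - s) 0 ≠ 0 ∧
      ∀ a ∈ L, a ≠ 0 → L.getD (L.length - s) 0 ≤ a := by
  set p : ℝ → Bool := fun a => decide (a ≠ 0) with hp
  set t := L.length - s with htdef
  have ht : t < L.length := by omega
  have hgetD : L.getD t 0 = L.get ⟨t, ht⟩ := by
    rw [List.getD_eq_getElem?_getD, List.getElem?_eq_getElem ht]; rfl
  -- all entries before index t are zero
  have hzero : ∀ i (hi : i < L.length), i < t → L.get ⟨i, hi⟩ = 0 := by
    intro i hi hit
    by_contra hne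
    have hipos : 0 < L.get ⟨i, hi⟩ := lt_of_le_of_ne (h0 _ (L.get_mem _)) (Ne.symm hne)
    have hall : ∀ a ∈ L.drop i, p a := by
      intro a ha
      obtain ⟨k, hk, rfl⟩ := List.mem_iff_getElem.mp ha
      have hk' : i + k < L.length := by
        simp only [List.length_drop] at hk; omega
      have hle : L.get ⟨i, hi⟩ ≤ L.get ⟨i + k, hk'⟩ :=
        hs.rel_get_of_le (by simp [Fin.le_def])
      have hgd : (List.drop i L)[k] = L.get ⟨i + k, hk'⟩ := by
        simp [List.getElem_drop]
      rw [hgd]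
      simp only [hp, decide_eq_true_eq]
      intro h
      rw [h] at hle
      have : L.get ⟨i, hi⟩ = 0 := le_antisymm hle hipos.le
      exact hne this
    have h1 : (L.drop i).countP p = (L.drop i).length := List.countP_eq_length.mpr hall
    have h2 : (L.drop i).countP p ≤ L.countP p := (List.drop_sublist i L).countP_le
    rw [h1, List.length_drop, hcount] at h2
    omega
  have hMne : L.get ⟨t, ht⟩ ≠ 0 := by
    intro h
    have htake : ∀ a ∈ L.take (t + 1), ¬ p a := by
      intro a ha
      obtain ⟨k, hk, rfl⟩ := List.mem_iff_getElem.mp ha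
      rw [List.getElem_take] at *
      simp only [List.length_take] at hk
      have hk' : k < L.length := by omega
      have : L[k] = 0 := by
        rcases Nat.lt_or_ge k t with h' | h'
        · exact hzero k hk' h'
        · have : k = t := by omega
          subst this; exact h
      simp [hp, this]
    have h1 : (L.take (t + 1)).countP p = 0 := List.countP_eq_zero.mpr htake
    have h2 : L.countP p = (L.take (t+1)).countP p + (L.drop (t+1)).countP p := by
      conv_lhs => rw [← List.take_append_drop (t+1) L]
      rw [List.countP_append]
    have h3 : (L.drop (t+1)).countP p ≤ (L.drop (t+1)).length := List.countP_le_length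
    rw [List.length_drop] at h3
    rw [hcount, h1] at h2
    omega
  refine ⟨hgetD ▸ L.get_mem _, hgetD ▸ hMne, ?_⟩
  intro a ha hane
  obtain ⟨k, hk, rfl⟩ := List.mem_iff_getElem.mp ha
  have hkt : t ≤ k := by
    by_contra h
    exact hane (hzero k hk (by omega))
  rw [hgetD]
  have := hs.rel_get_of_le (a := ⟨t, ht⟩) (b := ⟨k, hk⟩) (by simp [Fin.le_def]; omega)
  simpa using this


lemma Mth_spec {n : ℕ} (B : Finset (Fin n)) (s : ℕ) (x : Fin n → ℂ)
    (hspos : 0 < s) (hsle : s ≤ B.card) (hcount : blockL0 B x = s) :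
    (∃ j ∈ B, x j ≠ 0 ∧ ‖x j‖ = Mth B s x) ∧
      (∀ j ∈ B, x j ≠ 0 → Mth B s x ≤ ‖x j‖) := by
  classical
  set L := Multiset.sort (B.val.map fun j => ‖x j‖) (· ≤ ·) with hL
  have hLm : (L : Multiset ℝ) = B.val.map fun j => ‖x j‖ := Multiset.sort_eq ..
  have hlen : L.length = B.card := by
    simpa using congrArg Multiset.card hLm
  have hsorted : L.Pairwise (· ≤ ·) := Multiset.pairwise_sort ..
  have hmemL : ∀ a ∈ L, ∃ j ∈ B, ‖x j‖ = a := by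
    intro a ha
    have : a ∈ (B.val.map fun j => ‖x j‖) := by rw [← hLm]; exact_mod_cast ha
    obtain ⟨j, hj, hja⟩ := Multiset.mem_map.mp this
    exact ⟨j, hj, hja⟩
  have h0 : ∀ a ∈ L, 0 ≤ a := by
    intro a ha; obtain ⟨j, _, rfl⟩ := hmemL a ha; exact norm_nonneg _
  have hcountL : L.countP (fun a => decide (a ≠ 0)) = s := by
    classical
    have h1 : L.countP (fun a => decide (a ≠ 0)) =
        Multiset.countP (fun a : ℝ => a ≠ 0) (L : Multiset ℝ) :=
      (Multiset.coe_countP _ _).symm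
    rw [h1, hLm, Multiset.countP_map, ← hcount]
    have h2 : blockL0 B x = Multiset.countP (fun j => x j ≠ 0) B.val := by
      unfold blockL0
      rw [Multiset.countP_eq_card_filter, Finset.card, Finset.filter_val]
    rw [h2, Multiset.countP_eq_card_filter]
    congr 1
    exact Multiset.filter_congr (fun j _ => by simp [norm_ne_zero_iff])
  have key := sorted_key L hsorted h0 s hspos (by omega) hcountL
  have hMth : Mth B s x = L.getD (L.length - s) 0 := rfl
  obtain ⟨hmem, hne, hmin⟩ := key
  constructor
  · obtain ⟨j, hj, hja⟩ := hmemL _ hmem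
    refine ⟨j, hj, ?_, by rw [hja, hMth]⟩
    rw [← hja] at hne
    simpa [norm_ne_zero_iff] using hne
  · intro j hj hjne
    rw [hMth]
    refine hmin _ ?_ (by simpa [norm_ne_zero_iff] using hjne)
    rw [← Multiset.mem_coe, hLm]
    exact Multiset.mem_map.mpr ⟨j, hj, rfl⟩


lemma blockL0_le_card {n : ℕ} (B : Finset (Fin n)) (w : Fin n → ℂ) (T : Finset (Fin n))
    (h : ∀ j ∈ B, w j ≠ 0 → j ∈ T) : blockL0 B w ≤ T.card := by
  classical
  unfold blockL0
  apply Finset.card_le_card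
  intro j hj
  simp only [Finset.mem_filter] at hj
  exact h j hj.1 hj.2

lemma blockL0_eq {n : ℕ} (B : Finset (Fin n)) (w : Fin n → ℂ)
    [DecidablePred fun j => w j ≠ 0] :
    blockL0 B w = (B.filter fun j => w j ≠ 0).card := by
  unfold blockL0
  congr 1
  ext j
  simp

set_option maxHeartbeats 1000000 in
lemma block_char {n : ℕ} (B : Finset (Fin n)) (s : ℕ) (hspos : 0 < s) (hsle : s ≤ B.card)
    (τ : ℝ) (hτ : 0 < τ) (x g : Fin n → ℂ) (hfeas : blockL0 B x ≤ s) :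
    IsBlockProj B s x (fun j => x j - (τ : ℂ) * g j) ↔
      ((blockL0 B x = s → (∀ j ∈ B, x j ≠ 0 → g j = 0) ∧
          (∀ j ∈ B, x j = 0 → ‖g j‖ ≤ Mth B s x / τ)) ∧
        (blockL0 B x < s → ∀ j ∈ B, g j = 0)) := by
  classical
  set u : Fin n → ℂ := fun j => x j - (τ : ℂ) * g j with hu
  have hxu : ∀ j, x j - u j = (τ : ℂ) * g j := by intro j; simp [hu]
  have hnxu : ∀ j, ‖x j - u j‖ = τ * ‖g j‖ := by
    intro j
    rw [hxu, norm_mul, Complex.norm_real, Real.norm_eq_abs, abs_of_pos hτ]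
  have hnu0 : ∀ j, x j = 0 → ‖u j‖ = τ * ‖g j‖ := by
    intro j hj
    have h : u j = -((τ : ℂ) * g j) := by simp [hu, hj]
    rw [h, norm_neg, norm_mul, Complex.norm_real, Real.norm_eq_abs, abs_of_pos hτ]
  have hgz : ∀ j, x j - u j = 0 → g j = 0 := by
    intro j h
    rw [hxu] at h
    rcases mul_eq_zero.mp h with h | h
    · exact absurd h (by exact_mod_cast hτ.ne')
    · exact h
  have hProj : IsBlockProj B s x u ↔
      ∀ w, blockL0 B w ≤ s →
        (∑ j ∈ B, ‖x j - u j‖ ^ 2) ≤ ∑ j ∈ B, ‖w j - u j‖ ^ 2 := by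
    constructor
    · rintro ⟨-, h⟩ w hw
      have h2 : (0 : ℝ) ≤ ∑ j ∈ B, ‖w j - u j‖ ^ 2 := by positivity
      exact (Real.sqrt_le_sqrt_iff h2).mp (h w hw)
    · exact fun h => ⟨hfeas, fun w hw => Real.sqrt_le_sqrt (h w hw)⟩
  rw [hProj]
  set S0 := B.filter (fun j => x j ≠ 0) with hS0
  have hS0card : S0.card = blockL0 B x := (blockL0_eq B x).symm
  have hS0sub : S0 ⊆ B := Finset.filter_subset _ _
  constructor
  · intro hP
    have stepA : ∀ j ∈ B, x j ≠ 0 → g j = 0 := by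
      set w0 : Fin n → ℂ := fun j => if x j = 0 then 0 else u j with hw0
      have hw0le : blockL0 B w0 ≤ s := by
        refine le_trans (blockL0_le_card B w0 S0 ?_) (by omega)
        intro j hj hne
        simp only [hw0] at hne
        by_cases hx : x j = 0
        · simp [hx] at hne
        · exact Finset.mem_filter.mpr ⟨hj, hx⟩
      have hineq := hP w0 hw0le
      rw [← Finset.sum_filter_add_sum_filter_not B (fun j => x j ≠ 0)
            (fun j => ‖x j - u j‖ ^ 2),
          ← Finset.sum_filter_add_sum_filter_not B (fun j => x j ≠ 0)
            (fun j => ‖w0 j - u j‖ ^ 2)] at hineq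
      have e1 : ∑ j ∈ B.filter (fun j => ¬x j ≠ 0), ‖w0 j - u j‖ ^ 2
          = ∑ j ∈ B.filter (fun j => ¬x j ≠ 0), ‖x j - u j‖ ^ 2 := by
        refine Finset.sum_congr rfl fun j hj => ?_
        have hx : x j = 0 := by simpa using (Finset.mem_filter.mp hj).2
        simp [hw0, hx]
      have e2 : ∑ j ∈ B.filter (fun j => x j ≠ 0), ‖w0 j - u j‖ ^ 2 = 0 := by
        refine Finset.sum_eq_zero fun j hj => ?_
        have hx : x j ≠ 0 := (Finset.mem_filter.mp hj).2
        simp [hw0, hx]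
      rw [e1, e2] at hineq
      have hle0 : ∑ j ∈ B.filter (fun j => x j ≠ 0), ‖x j - u j‖ ^ 2 ≤ 0 := by linarith
      have hall := (Finset.sum_eq_zero_iff_of_nonneg (fun j _ => by positivity)).mp
        (le_antisymm hle0 (by positivity))
      intro j hjB hjx
      have h1 := hall j (Finset.mem_filter.mpr ⟨hjB, hjx⟩)
      exact hgz j (norm_eq_zero.mp (pow_eq_zero_iff two_ne_zero |>.mp h1))
    constructor
    · intro hcard_eq
      refine ⟨stepA, ?_⟩
      intro j hjB hjx
      obtain ⟨⟨l0, hl0B, hl0ne, hl0eq⟩, hmin⟩ := Mth_spec B s x hspos hsle hcard_eq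
      have hjl0 : j ≠ l0 := fun h => hl0ne (h ▸ hjx)
      set w2 : Fin n → ℂ := fun p => if p = j then u j else if p = l0 then 0 else x p with hw2
      have hl0S0 : l0 ∈ S0 := Finset.mem_filter.mpr ⟨hl0B, hl0ne⟩
      have hw2le : blockL0 B w2 ≤ s := by
        refine le_trans (blockL0_le_card B w2 (insert j (S0.erase l0)) ?_) ?_
        · intro p hpB hpne
          simp only [hw2] at hpne
          by_cases h1 : p = j
          · simp [h1]
          · rw [if_neg h1] at hpne
            by_cases h2 : p = l0
            · simp [h2] at hpne
            · rw [if_neg h2] at hpne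
              exact Finset.mem_insert_of_mem
                (Finset.mem_erase.mpr ⟨h2, Finset.mem_filter.mpr ⟨hpB, hpne⟩⟩)
        · have hc1 := Finset.card_insert_le j (S0.erase l0)
          have hc2 := Finset.card_erase_of_mem hl0S0
          have hc3 : 0 < S0.card := Finset.card_pos.mpr ⟨l0, hl0S0⟩
          omega
      have hineq := hP w2 hw2le
      have hl0B' : l0 ∈ B.erase j := Finset.mem_erase.mpr ⟨fun h => hjl0 h.symm, hl0B⟩
      have dec1 : ∀ f : Fin n → ℝ,
          ∑ p ∈ B, f p = f j + f l0 + ∑ p ∈ (B.erase j).erase l0, f p := by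
        intro f
        rw [← Finset.add_sum_erase B f hjB, ← Finset.add_sum_erase _ f hl0B']
        ring
      rw [dec1, dec1] at hineq
      have hrest : ∑ p ∈ (B.erase j).erase l0, ‖w2 p - u p‖ ^ 2
          = ∑ p ∈ (B.erase j).erase l0, ‖x p - u p‖ ^ 2 := by
        refine Finset.sum_congr rfl fun p hp => ?_
        have h1 : p ≠ l0 := (Finset.mem_erase.mp hp).1
        have h2 : p ≠ j := (Finset.mem_erase.mp (Finset.mem_erase.mp hp).2).1
        simp [hw2, h1, h2]
      rw [hrest] at hineq
      have hgl0 := stepA l0 hl0B hl0ne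
      have t1 : ‖x l0 - u l0‖ = 0 := by rw [hnxu]; simp [hgl0]
      have t2 : ‖w2 j - u j‖ = 0 := by simp [hw2]
      have t3 : ‖w2 l0 - u l0‖ = ‖x l0‖ := by
        have h1 : w2 l0 = 0 := by
          simp only [hw2]
          rw [if_neg (fun h => hjl0 h.symm)]
          simp
        have h2 : u l0 = x l0 := by simp [hu, hgl0]
        rw [h1, h2]
        simp
      rw [t1, t2, t3, hnxu] at hineq
      have h5 : τ * ‖g j‖ ≤ ‖x l0‖ := by
        have h6 : (τ * ‖g j‖) ^ 2 ≤ ‖x l0‖ ^ 2 := by linarith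
        exact (pow_le_pow_iff_left₀ (by positivity) (norm_nonneg _) two_ne_zero).mp h6
      rw [hl0eq] at h5
      rw [le_div_iff₀ hτ]
      linarith
    · intro hcard_lt j hjB
      by_cases hx : x j ≠ 0
      · exact stepA j hjB hx
      push_neg at hx
      set w1 : Fin n → ℂ := fun l => if l = j then u j else x l with hw1
      have hw1le : blockL0 B w1 ≤ s := by
        refine le_trans (blockL0_le_card B w1 (insert j S0) ?_) ?_
        · intro p hpB hpne
          simp only [hw1] at hpne
          by_cases h1 : p = j
          · simp [h1]
          · rw [if_neg h1] at hpne
            exact Finset.mem_insert_of_mem (Finset.mem_filter.mpr ⟨hpB, hpne⟩)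
        · have := Finset.card_insert_le j S0
          omega
      have hineq := hP w1 hw1le
      have dec1 : ∀ f : Fin n → ℝ, ∑ p ∈ B, f p = f j + ∑ p ∈ B.erase j, f p :=
        fun f => (Finset.add_sum_erase B f hjB).symm
      rw [dec1, dec1] at hineq
      have hrest : ∑ p ∈ B.erase j, ‖w1 p - u p‖ ^ 2 = ∑ p ∈ B.erase j, ‖x p - u p‖ ^ 2 := by
        refine Finset.sum_congr rfl fun p hp => ?_
        simp [hw1, (Finset.mem_erase.mp hp).1]
      rw [hrest] at hineq
      have h2 : ‖w1 j - u j‖ = 0 := by simp [hw1]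
      rw [h2] at hineq
      have h3 : ‖x j - u j‖ = 0 := by nlinarith [norm_nonneg (x j - u j)]
      exact hgz j (norm_eq_zero.mp h3)
  · intro hR w hw
    rcases lt_or_eq_of_le hfeas with hlt | heq
    · have hg := hR.2 hlt
      have hz : ∑ j ∈ B, ‖x j - u j‖ ^ 2 = 0 :=
        Finset.sum_eq_zero fun j hj => by rw [hnxu]; simp [hg j hj]
      rw [hz]
      positivity
    · obtain ⟨hgsupp, hgbound⟩ := hR.1 heq
      obtain ⟨⟨l0, hl0B, hl0ne, hl0eq⟩, hmin⟩ := Mth_spec B s x hspos hsle heq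
      set M := Mth B s x with hM
      have hM0 : 0 ≤ M := hl0eq ▸ norm_nonneg _
      have hoffb : ∀ j ∈ B, x j = 0 → τ * ‖g j‖ ≤ M := by
        intro j hj hx
        have h := hgbound j hj hx
        rw [le_div_iff₀ hτ] at h
        linarith
      set T := B.filter (fun j => w j ≠ 0) with hT
      have hTsub : T ⊆ B := Finset.filter_subset _ _
      have hTcard : T.card ≤ s := by
        rw [hT, ← blockL0_eq B w]
        exact hw
      have hLHS : ∑ j ∈ B, ‖x j - u j‖ ^ 2 = ∑ j ∈ B \ S0, ‖u j‖ ^ 2 := by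
        rw [← Finset.sum_filter_add_sum_filter_not B (fun j => x j ≠ 0)
              (fun j => ‖x j - u j‖ ^ 2)]
        have e1 : ∑ j ∈ S0, ‖x j - u j‖ ^ 2 = 0 := by
          refine Finset.sum_eq_zero fun j hj => ?_
          obtain ⟨hjB, hjx⟩ := Finset.mem_filter.mp hj
          rw [hnxu]
          simp [hgsupp j hjB hjx]
        have e2 : B.filter (fun j => ¬x j ≠ 0) = B \ S0 := by
          rw [hS0, Finset.filter_not]
        rw [e2, e1, zero_add]
        refine Finset.sum_congr rfl fun j hj => ?_
        have hjx : x j = 0 := by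
          have hm := Finset.mem_sdiff.mp hj
          by_contra h
          exact hm.2 (Finset.mem_filter.mpr ⟨hm.1, h⟩)
        rw [hnxu, ← hnu0 j hjx]
      have hRHS : ∑ j ∈ B \ T, ‖u j‖ ^ 2 ≤ ∑ j ∈ B, ‖w j - u j‖ ^ 2 := by
        rw [← Finset.sum_filter_add_sum_filter_not B (fun j => w j ≠ 0)
              (fun j => ‖w j - u j‖ ^ 2)]
        have e2 : B.filter (fun j => ¬w j ≠ 0) = B \ T := by
          rw [hT, Finset.filter_not]
        have e3 : ∑ j ∈ B \ T, ‖u j‖ ^ 2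
            = ∑ j ∈ B.filter (fun j => ¬w j ≠ 0), ‖w j - u j‖ ^ 2 := by
          rw [e2]
          refine Finset.sum_congr rfl fun j hj => ?_
          have hjw : w j = 0 := by
            have hm := Finset.mem_sdiff.mp hj
            by_contra h
            exact hm.2 (Finset.mem_filter.mpr ⟨hm.1, h⟩)
          simp [hjw]
        rw [e3]
        exact le_add_of_nonneg_left (by positivity)
      rw [hLHS]
      refine le_trans ?_ hRHS
      have hsplit1 : B \ S0 = (B \ (S0 ∪ T)) ∪ (T \ S0) := by
        ext p
        have hpT : p ∈ T → p ∈ B := fun h => hTsub h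
        simp only [Finset.mem_sdiff, Finset.mem_union]
        tauto
      have hsplit2 : B \ T = (B \ (S0 ∪ T)) ∪ (S0 \ T) := by
        ext p
        have hpS : p ∈ S0 → p ∈ B := fun h => hS0sub h
        simp only [Finset.mem_sdiff, Finset.mem_union]
        tauto
      have hd1 : Disjoint (B \ (S0 ∪ T)) (T \ S0) := by
        rw [Finset.disjoint_left]
        intro p h1 h2
        exact (Finset.mem_sdiff.mp h1).2
          (Finset.mem_union_right _ (Finset.mem_sdiff.mp h2).1)
      have hd2 : Disjoint (B \ (S0 ∪ T)) (S0 \ T) := by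
        rw [Finset.disjoint_left]
        intro p h1 h2
        exact (Finset.mem_sdiff.mp h1).2
          (Finset.mem_union_left _ (Finset.mem_sdiff.mp h2).1)
      rw [hsplit1, hsplit2, Finset.sum_union hd1, Finset.sum_union hd2]
      have key : ∑ j ∈ T \ S0, ‖u j‖ ^ 2 ≤ ∑ j ∈ S0 \ T, ‖u j‖ ^ 2 := by
        have hb1 : ∀ j ∈ T \ S0, ‖u j‖ ^ 2 ≤ M ^ 2 := by
          intro j hj
          obtain ⟨hjT, hjS⟩ := Finset.mem_sdiff.mp hj
          have hjB : j ∈ B := hTsub hjT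
          have hjx : x j = 0 := by
            by_contra h
            exact hjS (Finset.mem_filter.mpr ⟨hjB, h⟩)
          rw [hnu0 j hjx]
          have h1 := hoffb j hjB hjx
          have h0 : (0 : ℝ) ≤ τ * ‖g j‖ := by positivity
          nlinarith
        have hb2 : ∀ j ∈ S0 \ T, M ^ 2 ≤ ‖u j‖ ^ 2 := by
          intro j hj
          obtain ⟨hjS, hjT⟩ := Finset.mem_sdiff.mp hj
          obtain ⟨hjB, hjx⟩ := Finset.mem_filter.mp hjS
          have hgj := hgsupp j hjB hjx
          have huj : u j = x j := by simp [hu, hgj]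
          rw [huj]
          have h1 := hmin j hjB hjx
          nlinarith
        have hcards : (T \ S0).card ≤ (S0 \ T).card := by
          have h1 := Finset.card_sdiff_add_card_inter T S0
          have h2 := Finset.card_sdiff_add_card_inter S0 T
          have h3 : (T ∩ S0).card = (S0 ∩ T).card := by rw [Finset.inter_comm]
          have hS0c : S0.card = s := by omega
          omega
        calc ∑ j ∈ T \ S0, ‖u j‖ ^ 2 ≤ (T \ S0).card • M ^ 2 :=
              Finset.sum_le_card_nsmul _ _ _ hb1
          _ = (T \ S0).card * M ^ 2 := nsmul_eq_mul _ _
          _ ≤ (S0 \ T).card * M ^ 2 := by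
              have hc : ((T \ S0).card : ℝ) ≤ ((S0 \ T).card : ℝ) := by exact_mod_cast hcards
              nlinarith [sq_nonneg M]
          _ = (S0 \ T).card • M ^ 2 := (nsmul_eq_mul _ _).symm
          _ ≤ ∑ j ∈ S0 \ T, ‖u j‖ ^ 2 := Finset.card_nsmul_le_sum _ _ _ hb2
      linarith

theorem tau_stationary_characterization (m n I : ℕ) (A : Matrix (Fin m) (Fin n) ℂ)
    (y : Fin m → ℂ) (B : Fin I → Finset (Fin n))
    (hdisj : ∀ i i', i ≠ i' → Disjoint (B i) (B i'))
    (hne : ∀ i, (B i).Nonempty)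
    (hcover : ∀ j, ∃ i, j ∈ B i)
    (s : Fin I → ℕ) (hspos : ∀ i, 0 < s i) (hsle : ∀ i, s i ≤ (B i).card)
    (τ : ℝ) (hτpos : 0 < τ)
    (xstar : Fin n → ℂ)
    (hfeas : ∀ i, blockL0 (B i) xstar ≤ s i) :
    (∀ i, IsBlockProj (B i) (s i) xstar
        (fun j => xstar j - (τ : ℂ) * gradf A y xstar j)) ↔
      (∀ i,
        (blockL0 (B i) xstar = s i →
          (∀ j ∈ B i, xstar j ≠ 0 → gradf A y xstar j = 0) ∧
          (∀ j ∈ B i, xstar j = 0 →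
            ‖gradf A y xstar j‖ ≤ Mth (B i) (s i) xstar / τ)) ∧
        (blockL0 (B i) xstar < s i → ∀ j ∈ B i, gradf A y xstar j = 0)) :=
  forall_congr' fun i =>
    block_char (B i) (s i) (hspos i) (hsle i) τ hτpos xstar (gradf A y xstar) (hfeas i)
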